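/- Let A : ℝ → ℝ^{n×n}, B : ℝ → ℝ^{n×m}, Q : ℝ → ℝ^{n×n}, R : ℝ → ℝ^{m×m}, P : ℝ → ℝ^{n×n} be matrix-valued functions differentiable at t, with Q(τ), R(τ), P(τ) symmetric, M₃(τ) = R(τ) + B(τ)ᵀP(τ)B(τ) invertible for τ in a neighborhood of t, and suppose P(τ) satisfies the DARE determined by (A(τ), B(τ), Q(τ), R(τ)) for all τ in a neighborhood of t. Define at t: M₂ = M₃⁻¹, M₁ = P − PBM₂BᵀP, and Z₁ = I_{n²} − (Aᵀ ⊗ Aᵀ)[I_{n²} − (PBM₂Bᵀ ⊗ I_n) − (I_n ⊗ PBM₂Bᵀ) + (PB ⊗ PB)(M₂ ⊗ M₂)(Bᵀ ⊗ Bᵀ)], Z₂ = (V_{n,n} + I_{n²})(I_n ⊗ AᵀM₁), Z₃ = (Aᵀ ⊗ Aᵀ)[(PB ⊗ PB)(M₂ ⊗ M₂)(I_{m²} + V_{m,m})(I_m ⊗ BᵀP) − (I_{n²} + V_{n,n})(PBM₂ ⊗ P)], Z₄ = I_{n²}, Z₅ = (Aᵀ ⊗ Aᵀ)(PB ⊗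 PB)(M₂ ⊗ M₂). Then Z₁ vec(P′(t)) = Z₂ vec(A′(t)) + Z₃ vec(B′(t)) + Z₄ vec(Q′(t)) + Z₅ vec(R′(t)); if moreover Z₁ is invertible, then vec(P′(t)) = Z₁⁻¹[Z₂ vec(A′(t)) + Z₃ vec(B′(t)) + Z₄ vec(Q′(t)) + Z₅ vec(R′(t))]. -/

import Mathlib

open Matrix Filter
open scoped Kronecker Topology

/-- `vec` stacks the columns of a matrix into a vector, indexed by (column, row). -/
def vecM {p q : ℕ} (M : Matrix (Fin p) (Fin q) ℝ) : Fin q × Fin p → ℝ :=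
  fun ji => M ji.2 ji.1

/-- The commutation matrix `V_{p,p}`, defined by `V vec X = vec Xᵀ`. -/
def commMatrix (p : ℕ) : Matrix (Fin p × Fin p) (Fin p × Fin p) ℝ :=
  Matrix.of fun a b => if a.1 = b.2 ∧ a.2 = b.1 then 1 else 0

/-- `M₂ = (R + BᵀPB)⁻¹`. -/
noncomputable def dareM₂ {n m : ℕ} (B : Matrix (Fin n) (Fin m) ℝ)
    (P : Matrix (Fin n) (Fin n) ℝ) (R : Matrix (Fin m) (Fin m) ℝ) :
    Matrix (Fin m) (Fin m) ℝ := (R + Bᵀ * P * B)⁻¹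

/-- `M₁ = P − PBM₂BᵀP`. -/
noncomputable def dareM₁ {n m : ℕ} (B : Matrix (Fin n) (Fin m) ℝ)
    (P : Matrix (Fin n) (Fin n) ℝ) (R : Matrix (Fin m) (Fin m) ℝ) :
    Matrix (Fin n) (Fin n) ℝ :=
  P - P * B * dareM₂ B P R * Bᵀ * P

/-- `Z₁ = I − (Aᵀ⊗Aᵀ)[I − (PBM₂Bᵀ⊗I) − (I⊗PBM₂Bᵀ) + (PB⊗PB)(M₂⊗M₂)(Bᵀ⊗Bᵀ)]`. -/
noncomputable def dareZ₁ {n m : ℕ} (A : Matrix (Fin n) (Fin n) ℝ)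
    (B : Matrix (Fin n) (Fin m) ℝ) (P : Matrix (Fin n) (Fin n) ℝ)
    (R : Matrix (Fin m) (Fin m) ℝ) : Matrix (Fin n × Fin n) (Fin n × Fin n) ℝ :=
  1 - (Aᵀ ⊗ₖ Aᵀ) *
    (1 - ((P * B * dareM₂ B P R * Bᵀ) ⊗ₖ (1 : Matrix (Fin n) (Fin n) ℝ))
       - ((1 : Matrix (Fin n) (Fin n) ℝ) ⊗ₖ (P * B * dareM₂ B P R * Bᵀ))
       + ((P * B) ⊗ₖ (P * B)) * (dareM₂ B P R ⊗ₖ dareM₂ B P R) * (Bᵀ ⊗ₖ Bᵀ))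

/-- `Z₂ = (V_{n,n} + I)(I ⊗ AᵀM₁)`. -/
noncomputable def dareZ₂ {n m : ℕ} (A : Matrix (Fin n) (Fin n) ℝ)
    (B : Matrix (Fin n) (Fin m) ℝ) (P : Matrix (Fin n) (Fin n) ℝ)
    (R : Matrix (Fin m) (Fin m) ℝ) : Matrix (Fin n × Fin n) (Fin n × Fin n) ℝ :=
  (commMatrix n + 1) * ((1 : Matrix (Fin n) (Fin n) ℝ) ⊗ₖ (Aᵀ * dareM₁ B P R))

/-- `Z₃ = (Aᵀ⊗Aᵀ)[(PB⊗PB)(M₂⊗M₂)(I + V_{m,m})(I ⊗ BᵀP) − (I + V_{n,n})(PBM₂ ⊗ P)]`. -/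
noncomputable def dareZ₃ {n m : ℕ} (A : Matrix (Fin n) (Fin n) ℝ)
    (B : Matrix (Fin n) (Fin m) ℝ) (P : Matrix (Fin n) (Fin n) ℝ)
    (R : Matrix (Fin m) (Fin m) ℝ) : Matrix (Fin n × Fin n) (Fin m × Fin n) ℝ :=
  (Aᵀ ⊗ₖ Aᵀ) *
    (((P * B) ⊗ₖ (P * B)) * (dareM₂ B P R ⊗ₖ dareM₂ B P R) *
        (1 + commMatrix m) * ((1 : Matrix (Fin m) (Fin m) ℝ) ⊗ₖ (Bᵀ * P))
      - (1 + commMatrix n) * ((P * B * dareM₂ B P R) ⊗ₖ P))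

/-- `Z₄ = I_{n²}`. -/
noncomputable def dareZ₄ (n : ℕ) : Matrix (Fin n × Fin n) (Fin n × Fin n) ℝ := 1

/-- `Z₅ = (Aᵀ⊗Aᵀ)(PB⊗PB)(M₂⊗M₂)`. -/
noncomputable def dareZ₅ {n m : ℕ} (A : Matrix (Fin n) (Fin n) ℝ)
    (B : Matrix (Fin n) (Fin m) ℝ) (P : Matrix (Fin n) (Fin n) ℝ)
    (R : Matrix (Fin m) (Fin m) ℝ) : Matrix (Fin n × Fin n) (Fin m × Fin m) ℝ :=
  (Aᵀ ⊗ₖ Aᵀ) * ((P * B) ⊗ₖ (P * B)) * (dareM₂ B P R ⊗ₖ dareM₂ B P R)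


open Matrix Filter
open scoped Kronecker Topology

/-- Entrywise derivative predicate for matrix-valued functions. -/
def HDM {p q : ℕ} (f : ℝ → Matrix (Fin p) (Fin q) ℝ)
    (f' : Matrix (Fin p) (Fin q) ℝ) (t : ℝ) : Prop :=
  ∀ i j, HasDerivAt (fun τ => f τ i j) (f' i j) t

namespace HDM

variable {p q r : ℕ} {f : ℝ → Matrix (Fin p) (Fin q) ℝ} {f' : Matrix (Fin p) (Fin q) ℝ} {t : ℝ}

lemma add {g : ℝ → Matrix (Fin p) (Fin q) ℝ} {g'} (hf : HDM f f' t) (hg : HDM g g' t) :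
    HDM (fun τ => f τ + g τ) (f' + g') t := fun i j => by
  simpa using (hf i j).fun_add (hg i j)

lemma sub {g : ℝ → Matrix (Fin p) (Fin q) ℝ} {g'} (hf : HDM f f' t) (hg : HDM g g' t) :
    HDM (fun τ => f τ - g τ) (f' - g') t := fun i j => by
  simpa using (hf i j).fun_sub (hg i j)

lemma transpose (hf : HDM f f' t) : HDM (fun τ => (f τ)ᵀ) f'ᵀ t := fun i j => hf j i

lemma mul {g : ℝ → Matrix (Fin q) (Fin r) ℝ} {g'} (hf : HDM f f' t) (hg : HDM g g' t) :
    HDM (fun τ => f τ * g τ) (f' * g t + f t * g') t := fun i j => by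
  have h := HasDerivAt.fun_sum (fun k (_ : k ∈ Finset.univ) => ((hf i k).fun_mul (hg k j)))
  simp only [Matrix.mul_apply, Matrix.add_apply]
  simpa [Finset.sum_add_distrib] using h

lemma unique {g : ℝ → Matrix (Fin p) (Fin q) ℝ} {g'} (hf : HDM f f' t) (hg : HDM g g' t)
    (h : ∀ᶠ τ in 𝓝 t, f τ = g τ) : f' = g' := by
  ext i j
  have h1 : (fun τ => f τ i j) =ᶠ[𝓝 t] (fun τ => g τ i j) :=
    h.mono fun τ hτ => congrFun (congrFun hτ i) j
  exact (hf i j).unique (h1.hasDerivAt_iff.mpr (hg i j))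

end HDM

lemma diffAt_det {p : ℕ} {f : ℝ → Matrix (Fin p) (Fin p) ℝ} {t : ℝ}
    (hf : ∀ i j, DifferentiableAt ℝ (fun τ => f τ i j) t) :
    DifferentiableAt ℝ (fun τ => (f τ).det) t := by
  simp only [Matrix.det_apply']
  apply DifferentiableAt.fun_sum
  intro σ _
  exact (DifferentiableAt.fun_finsetProd (fun i _ => hf (σ i) i)).const_mul _

lemma diffAt_inv_entry {p : ℕ} {f : ℝ → Matrix (Fin p) (Fin p) ℝ} {t : ℝ}
    (hf : ∀ i j, DifferentiableAt ℝ (fun τ => f τ i j) t)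
    (hd : (f t).det ≠ 0) (i j : Fin p) :
    DifferentiableAt ℝ (fun τ => (f τ)⁻¹ i j) t := by
  simp only [Matrix.inv_def, Matrix.smul_apply, Ring.inverse_eq_inv', smul_eq_mul,
    Matrix.adjugate_apply]
  refine ((diffAt_det hf).inv hd).mul (diffAt_det ?_)
  intro k l
  by_cases hk : k = j
  · simpa [Matrix.updateRow_apply, hk] using differentiableAt_const _
  · simpa [Matrix.updateRow_apply, hk] using hf k l

lemma HDM.inv {p : ℕ} {f : ℝ → Matrix (Fin p) (Fin p) ℝ} {f' : Matrix (Fin p) (Fin p) ℝ} {t : ℝ}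
    (hf : HDM f f' t) (hu : ∀ᶠ τ in 𝓝 t, IsUnit (f τ)) :
    HDM (fun τ => (f τ)⁻¹) (-((f t)⁻¹ * f' * (f t)⁻¹)) t := by
  have hut : IsUnit ((f t).det) := (Matrix.isUnit_iff_isUnit_det _).mp hu.self_of_nhds
  have hd : (f t).det ≠ 0 := hut.ne_zero
  have hdiff := fun i j => diffAt_inv_entry (fun i j => (hf i j).differentiableAt) hd i j
  set D : Matrix (Fin p) (Fin p) ℝ :=
    Matrix.of (fun i j => deriv (fun τ => (f τ)⁻¹ i j) t) with hDdef
  have hD : HDM (fun τ => (f τ)⁻¹) D t := fun i j => (hdiff i j).hasDerivAt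
  have hprod : HDM (fun τ => (f τ)⁻¹ * f τ) (D * f t + (f t)⁻¹ * f') t := hD.mul hf
  have hone : HDM (fun _ : ℝ => (1 : Matrix (Fin p) (Fin p) ℝ)) 0 t := fun i j => by
    simpa using hasDerivAt_const t ((1 : Matrix (Fin p) (Fin p) ℝ) i j)
  have heq : ∀ᶠ τ in 𝓝 t, (f τ)⁻¹ * f τ = 1 :=
    hu.mono fun τ h => Matrix.nonsing_inv_mul _ ((Matrix.isUnit_iff_isUnit_det _).mp h)
  have h0 : D * f t + (f t)⁻¹ * f' = 0 := hprod.unique hone heq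
  have h1 : D * f t = -((f t)⁻¹ * f') := by
    rw [eq_neg_iff_add_eq_zero]; exact h0
  have hDeq : D = -((f t)⁻¹ * f' * (f t)⁻¹) := by
    have := congrArg (fun M => M * (f t)⁻¹) h1
    simpa [Matrix.mul_nonsing_inv_cancel_right _ _ hut, Matrix.mul_assoc] using this
  exact hDeq ▸ hD

lemma vecM_add {p q : ℕ} (X Y : Matrix (Fin p) (Fin q) ℝ) :
    vecM (X + Y) = vecM X + vecM Y := rfl

lemma vecM_sub {p q : ℕ} (X Y : Matrix (Fin p) (Fin q) ℝ) :
    vecM (X - Y) = vecM X - vecM Y := rfl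

lemma kron_mulVec {p q r s : ℕ} (X : Matrix (Fin p) (Fin q) ℝ)
    (Y : Matrix (Fin r) (Fin s) ℝ) (Z : Matrix (Fin s) (Fin q) ℝ) :
    (X ⊗ₖ Y).mulVec (vecM Z) = vecM (Y * Z * Xᵀ) := by
  funext ji
  obtain ⟨j, i⟩ := ji
  simp only [Matrix.mulVec, dotProduct, vecM, Matrix.mul_apply,
    Fintype.sum_prod_type, Matrix.kroneckerMap_apply, Matrix.transpose_apply,
    Finset.sum_mul, Finset.mul_sum]
  exact Finset.sum_congr rfl fun k _ => Finset.sum_congr rfl fun l _ => by ring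

lemma comm_mulVec {p : ℕ} (X : Matrix (Fin p) (Fin p) ℝ) :
    (commMatrix p).mulVec (vecM X) = vecM Xᵀ := by
  funext ji
  obtain ⟨j, i⟩ := ji
  simp only [Matrix.mulVec, dotProduct, commMatrix, vecM, Matrix.of_apply,
    Fintype.sum_prod_type, Matrix.transpose_apply]
  simp [ite_and, Finset.sum_ite_eq, Finset.sum_ite_eq']

set_option maxHeartbeats 4000000 in
theorem dare_derivative {n m : ℕ}
    (A : ℝ → Matrix (Fin n) (Fin n) ℝ) (B : ℝ → Matrix (Fin n) (Fin m) ℝ)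
    (Q : ℝ → Matrix (Fin n) (Fin n) ℝ) (R : ℝ → Matrix (Fin m) (Fin m) ℝ)
    (P : ℝ → Matrix (Fin n) (Fin n) ℝ) (t : ℝ)
    (A' : Matrix (Fin n) (Fin n) ℝ) (B' : Matrix (Fin n) (Fin m) ℝ)
    (Q' : Matrix (Fin n) (Fin n) ℝ) (R' : Matrix (Fin m) (Fin m) ℝ)
    (P' : Matrix (Fin n) (Fin n) ℝ)
    (hA : ∀ i j, HasDerivAt (fun τ => A τ i j) (A' i j) t)
    (hB : ∀ i j, HasDerivAt (fun τ => B τ i j) (B' i j) t)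
    (hQ : ∀ i j, HasDerivAt (fun τ => Q τ i j) (Q' i j) t)
    (hR : ∀ i j, HasDerivAt (fun τ => R τ i j) (R' i j) t)
    (hP : ∀ i j, HasDerivAt (fun τ => P τ i j) (P' i j) t)
    (hQsymm : ∀ τ, (Q τ).IsSymm) (hRsymm : ∀ τ, (R τ).IsSymm)
    (hPsymm : ∀ τ, (P τ).IsSymm)
    (hinv : ∀ᶠ τ in 𝓝 t, IsUnit (R τ + (B τ)ᵀ * P τ * B τ))
    (hDARE : ∀ᶠ τ in 𝓝 t,
      P τ = (A τ)ᵀ * P τ * A τ -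
          (A τ)ᵀ * P τ * B τ * (R τ + (B τ)ᵀ * P τ * B τ)⁻¹ * ((B τ)ᵀ * P τ * A τ)
        + Q τ) :
    (dareZ₁ (A t) (B t) (P t) (R t)).mulVec (vecM P') =
      (dareZ₂ (A t) (B t) (P t) (R t)).mulVec (vecM A')
      + (dareZ₃ (A t) (B t) (P t) (R t)).mulVec (vecM B')
      + (dareZ₄ n).mulVec (vecM Q')
      + (dareZ₅ (A t) (B t) (P t) (R t)).mulVec (vecM R') ∧
    (IsUnit (dareZ₁ (A t) (B t) (P t) (R t)) →
      vecM P' =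
        (dareZ₁ (A t) (B t) (P t) (R t))⁻¹.mulVec
          ((dareZ₂ (A t) (B t) (P t) (R t)).mulVec (vecM A')
            + (dareZ₃ (A t) (B t) (P t) (R t)).mulVec (vecM B')
            + (dareZ₄ n).mulVec (vecM Q')
            + (dareZ₅ (A t) (B t) (P t) (R t)).mulVec (vecM R'))) := by
  have hA' : HDM A A' t := hA
  have hB' : HDM B B' t := hB
  have hQ' : HDM Q Q' t := hQ
  have hR' : HDM R R' t := hR
  have hP' : HDM P P' t := hP
  set a := A t with ha
  set b := B t with hb
  set p := P t with hp
  set r := R t with hr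
  have hPt : pᵀ = p := hPsymm t
  have hRt : rᵀ = r := hRsymm t
  have hm₃t : (r + bᵀ * p * b)ᵀ = r + bᵀ * p * b := by
    simp [Matrix.transpose_add, Matrix.transpose_mul, hPt, hRt, Matrix.mul_assoc]
  have hm₂t : ((r + bᵀ * p * b)⁻¹)ᵀ = (r + bᵀ * p * b)⁻¹ := by
    rw [Matrix.transpose_nonsing_inv, hm₃t]
  set m₂ := (r + bᵀ * p * b)⁻¹ with hm₂def
  set m₃' := R' + ((B'ᵀ * p + bᵀ * P') * b + bᵀ * p * B') with hm₃'def
  set m₂' := -(m₂ * m₃' * m₂) with hm₂'def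
  have hM₃ : HDM (fun τ => R τ + (B τ)ᵀ * P τ * B τ) m₃' t :=
    hR'.add (((hB'.transpose).mul hP').mul hB')
  have hM₂ : HDM (fun τ => (R τ + (B τ)ᵀ * P τ * B τ)⁻¹) m₂' t := hM₃.inv hinv
  have hF : HDM (fun τ => (A τ)ᵀ * P τ * A τ -
        (A τ)ᵀ * P τ * B τ * (R τ + (B τ)ᵀ * P τ * B τ)⁻¹ * ((B τ)ᵀ * P τ * A τ) + Q τ)
      (((A'ᵀ * p + aᵀ * P') * a + aᵀ * p * A')
        - ((((A'ᵀ * p + aᵀ * P') * b + aᵀ * p * B') * m₂ + aᵀ * p * b * m₂') * (bᵀ * p * a)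
            + aᵀ * p * b * m₂ * ((B'ᵀ * p + bᵀ * P') * a + bᵀ * p * A'))
        + Q') t :=
    (((((hA'.transpose).mul hP').mul hA')).sub
      (((((hA'.transpose).mul hP').mul hB').mul hM₂).mul (((hB'.transpose).mul hP').mul hA'))).add hQ'
  have hPF : P' = ((A'ᵀ * p + aᵀ * P') * a + aᵀ * p * A')
        - ((((A'ᵀ * p + aᵀ * P') * b + aᵀ * p * B') * m₂ + aᵀ * p * b * m₂') * (bᵀ * p * a)
            + aᵀ * p * b * m₂ * ((B'ᵀ * p + bᵀ * P') * a + bᵀ * p * A'))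
        + Q' := HDM.unique hP' hF hDARE
  have main : (dareZ₁ a b p r).mulVec (vecM P') =
      (dareZ₂ a b p r).mulVec (vecM A') + (dareZ₃ a b p r).mulVec (vecM B')
      + (dareZ₄ n).mulVec (vecM Q') + (dareZ₅ a b p r).mulVec (vecM R') := by
    simp only [dareZ₁, dareZ₂, dareZ₃, dareZ₄, dareZ₅, dareM₁, dareM₂, ← hm₂def]
    simp only [Matrix.sub_mulVec, Matrix.add_mulVec, Matrix.one_mulVec,
      ← Matrix.mulVec_mulVec, Matrix.mulVec_add, Matrix.mulVec_sub]
    simp only [kron_mulVec, comm_mulVec, Matrix.mulVec_add, Matrix.mulVec_sub]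
    simp only [Matrix.transpose_one, Matrix.one_mul, Matrix.mul_one,
      Matrix.transpose_mul, Matrix.transpose_transpose, Matrix.transpose_sub, hPt, hm₂t]
    simp only [← vecM_add, ← vecM_sub]
    refine congrArg vecM ?_
    rw [← sub_eq_zero]
    have hz : P' - ((A'ᵀ * p + aᵀ * P') * a + aᵀ * p * A'
        - ((((A'ᵀ * p + aᵀ * P') * b + aᵀ * p * B') * m₂ + aᵀ * p * b * m₂') * (bᵀ * p * a)
            + aᵀ * p * b * m₂ * ((B'ᵀ * p + bᵀ * P') * a + bᵀ * p * A'))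
        + Q') = 0 := sub_eq_zero.mpr hPF
    rw [← hz, hm₂'def, hm₃'def]
    simp only [Matrix.mul_add, Matrix.add_mul, Matrix.mul_sub, Matrix.sub_mul,
      Matrix.neg_mul, Matrix.mul_neg, Matrix.mul_assoc, Matrix.mul_one, Matrix.one_mul]
    abel
  refine ⟨main, fun hZ => ?_⟩
  have hdet := (Matrix.isUnit_iff_isUnit_det _).mp hZ
  rw [← main, Matrix.mulVec_mulVec, Matrix.nonsing_inv_mul _ hdet, Matrix.one_mulVec]
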